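/- Let {a(i): i∈ℕ} be a stationary process on a finite state space with E[a(1)]=0 satisfying the mixing estimate (3.2), and assume additionally that all odd mixed moments vanish: E[a(i_1)·…·a(i_r)]=0 for every odd r and all i_1,…,i_r∈ℕ. Then for every k∈ℕ there is a constant C' such that for all i_1≤…≤i_{2k} in ℕ: |E[a(i_1)·…·a(i_{2k})]| ≤ C'·α^{max{i_{2l}−i_{2l−1} : l=1,…,k}} ≤ C'·∏_{l=1}^{k} p^{i_{2l}−i_{2l−1}}, where p := α^{1/k}. -/

import Mathlib

set_option maxHeartbeats 1000000


open MeasureTheory ProbabilityTheory Finset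

/-- The event that the process `a` takes the values `s t` at the times `i t` for all `t` in a
given set of positions. -/
def valueEvent {Ω : Type} [MeasureSpace Ω] {k : ℕ} (a : ℕ → Ω → ℝ) (i : Fin k → ℕ)
    (s : Fin k → ℝ) (pos : Finset (Fin k)) : Set Ω :=
  {ω | ∀ t ∈ pos, a (i t) ω = s t}

/-- The mixing estimate (3.2): for all `k`, every split point `l` with `0 < l`, all monotone
time tuples `i_1 ≤ … ≤ i_k` and all states, the conditional probability of the future values
given the past values differs from the unconditional probability by at most
`C·α^{i_l - i_{l-1}}`, whenever the conditioning event has positive probability. -/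
def MixingEstimate {Ω : Type} [MeasureSpace Ω] (a : ℕ → Ω → ℝ) (C α : ℝ) : Prop :=
  ∀ (k : ℕ) (i : Fin k → ℕ), Monotone i → ∀ (s : Fin k → ℝ) (l : Fin k), 0 < l.val →
    volume (valueEvent a i s (univ.filter (fun t => t < l))) ≠ 0 →
    |(volume (valueEvent a i s (univ.filter (fun t => l ≤ t)) ∩
          valueEvent a i s (univ.filter (fun t => t < l)))).toReal /
        (volume (valueEvent a i s (univ.filter (fun t => t < l)))).toReal -
      (volume (valueEvent a i s (univ.filter (fun t => l ≤ t)))).toReal|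
      ≤ C * α ^ (i l - i ⟨l.val - 1, by omega⟩)

section Aux
variable {Ω : Type} [MeasureSpace Ω] {n : ℕ}

lemma valueEvent_measurableSet (a : ℕ → Ω → ℝ) (hmeas : ∀ j, Measurable (a j))
    (i : Fin n → ℕ) (s : Fin n → ℝ) (pos : Finset (Fin n)) :
    MeasurableSet (valueEvent a i s pos) := by
  have h : valueEvent a i s pos = ⋂ t ∈ pos, a (i t) ⁻¹' {s t} := by
    ext ω; simp [valueEvent]
  rw [h]
  exact MeasurableSet.biInter (pos : Set (Fin n)).to_countable
    fun t _ => (hmeas (i t)) (measurableSet_singleton (s t))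

lemma valueEvent_congr (a : ℕ → Ω → ℝ) (i : Fin n → ℕ) {s s' : Fin n → ℝ}
    (pos : Finset (Fin n)) (h : ∀ t ∈ pos, s t = s' t) :
    valueEvent a i s pos = valueEvent a i s' pos := by
  ext ω
  simp only [valueEvent, Set.mem_setOf_eq]
  constructor
  · intro H t ht; rw [← h t ht]; exact H t ht
  · intro H t ht; rw [h t ht]; exact H t ht

lemma sum_indicator_decomp (S : Finset ℝ) (a : ℕ → Ω → ℝ) (i : Fin n → ℕ)
    (hvals : ∀ j ω, a j ω ∈ S) (pos : Finset (Fin n)) {s₀ : ℝ} (hs₀ : s₀ ∈ S)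
    (f : (Fin n → ℝ) → ℝ) (ω : Ω) :
    ∑ s ∈ (Fintype.piFinset fun _ : Fin n => S).filter (fun s => ∀ t ∉ pos, s t = s₀),
      (valueEvent a i s pos).indicator (fun _ => f s) ω
      = f (fun t => if t ∈ pos then a (i t) ω else s₀) := by
  classical
  set cω : Fin n → ℝ := fun t => if t ∈ pos then a (i t) ω else s₀ with hc
  rw [Finset.sum_eq_single cω]
  · have hω : ω ∈ valueEvent a i cω pos := by
      intro t ht; simp [cω, ht]
    simp [Set.indicator_of_mem hω]
  · intro s hs hne
    rcases Finset.mem_filter.mp hs with ⟨hpi, hout⟩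
    have hω : ω ∉ valueEvent a i s pos := by
      intro hω
      apply hne
      funext t
      by_cases ht : t ∈ pos
      · rw [← hω t ht]; simp [cω, ht]
      · rw [hout t ht]; simp [cω, ht]
    simp [Set.indicator_of_notMem hω]
  · intro hc'
    exfalso; apply hc'
    refine Finset.mem_filter.mpr ⟨Fintype.mem_piFinset.mpr fun t => ?_, fun t ht => by simp [cω, ht]⟩
    by_cases ht : t ∈ pos <;> simp [cω, ht, hvals, hs₀]

lemma integral_sum_indicator [IsProbabilityMeasure (volume : Measure Ω)]
    (A : Finset (Fin n → ℝ)) (E : (Fin n → ℝ) → Set Ω) (hE : ∀ s, MeasurableSet (E s))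
    (c : (Fin n → ℝ) → ℝ) :
    ∫ ω, ∑ s ∈ A, (E s).indicator (fun _ => c s) ω
      = ∑ s ∈ A, c s * (volume (E s)).toReal := by
  rw [MeasureTheory.integral_finset_sum]
  · refine Finset.sum_congr rfl fun s _ => ?_
    rw [MeasureTheory.integral_indicator_const (c s) (hE s)]
    simp [mul_comm, Measure.real]
  · intro s _
    exact (integrable_const (c s)).indicator (hE s)

end Aux

lemma pow_sup_le_prod (k : ℕ) (hk : 1 ≤ k) (α : ℝ) (hα0 : 0 ≤ α) (hα1 : α < 1)
    (d : Fin k → ℕ) :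
    α ^ (Finset.univ.sup d) ≤ ∏ l : Fin k, (α ^ ((1 : ℝ) / k)) ^ (d l) := by
  have hsum : (∑ l, d l) ≤ k * Finset.univ.sup d := by
    calc (∑ l, d l) ≤ (Finset.univ : Finset (Fin k)).card • Finset.univ.sup d :=
          Finset.sum_le_card_nsmul _ _ _ fun l _ => Finset.le_sup (Finset.mem_univ l)
      _ = k * Finset.univ.sup d := by simp [mul_comm]
  rcases eq_or_lt_of_le hα0 with h0 | hpos
  · by_cases hsup : Finset.univ.sup d = 0
    · have hall : ∀ l, d l = 0 := fun l =>
        Nat.le_zero.mp (hsup ▸ Finset.le_sup (Finset.mem_univ l))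
      simp [hsup, hall]
    · rw [← h0, zero_pow hsup]
      exact Finset.prod_nonneg fun l _ => pow_nonneg (Real.rpow_nonneg le_rfl _) _
  · have hk0 : (0:ℝ) < k := by positivity
    have key : (∏ l : Fin k, (α ^ ((1 : ℝ) / k)) ^ (d l))
        = α ^ (((∑ l, d l : ℕ) : ℝ) / (k : ℝ)) := by
      rw [Finset.prod_pow_eq_pow_sum, ← Real.rpow_natCast (α ^ ((1 : ℝ) / k)) (∑ l, d l),
        ← Real.rpow_mul hα0]
      congr 1
      field_simp
    rw [key, ← Real.rpow_natCast α (Finset.univ.sup d)]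
    apply Real.rpow_le_rpow_of_exponent_ge hpos hα1.le
    rw [div_le_iff₀ hk0]
    calc ((∑ l, d l : ℕ) : ℝ) ≤ ((k * Finset.univ.sup d : ℕ) : ℝ) := by exact_mod_cast hsum
      _ = ((Finset.univ.sup d : ℕ) : ℝ) * (k : ℝ) := by push_cast; ring


/-- **Condition (A2) for finite-state mixing processes with vanishing odd moments.** Let
`{a(i)}` be a stationary process with values in a finite state space `S ⊆ ℝ`, `E[a(0)] = 0`,
satisfying the mixing estimate (3.2), and assume all odd mixed moments vanish. Then for every
`k ≥ 1` there is a constant `C' ≥ 0` such that for all `i_1 ≤ … ≤ i_{2k}`: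
`|E[a(i_1)⋯a(i_{2k})]| ≤ C'·α^{max{i_{2l} - i_{2l-1} : l=1,…,k}}
  ≤ C'·∏_{l=1}^{k} p^{i_{2l} - i_{2l-1}}`, where `p := α^{1/k}`. -/
theorem even_moment_A2_bound
    {Ω : Type} [MeasureSpace Ω] [IsProbabilityMeasure (volume : Measure Ω)]
    (S : Finset ℝ) (hS : 2 ≤ S.card)
    (a : ℕ → Ω → ℝ) (hmeas : ∀ i, Measurable (a i))
    (hvals : ∀ i ω, a i ω ∈ S)
    (hstat : ∀ h : ℕ, IdentDistrib (fun ω => fun i : ℕ => a (i + h) ω)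
      (fun ω => fun i : ℕ => a i ω) volume volume)
    (hmean : ∫ ω, a 0 ω = 0)
    (C α : ℝ) (hC : 0 < C) (hα0 : 0 ≤ α) (hα1 : α < 1)
    (hmix : MixingEstimate a C α)
    (hodd : ∀ r : ℕ, Odd r → ∀ i : Fin r → ℕ, (∫ ω, ∏ u : Fin r, a (i u) ω) = 0)
    (k : ℕ) (hk : 1 ≤ k) :
    ∃ C' : ℝ, 0 ≤ C' ∧
      ∀ i : Fin (2 * k) → ℕ, Monotone i →
        |∫ ω, ∏ r : Fin (2 * k), a (i r) ω|
            ≤ C' * α ^ (Finset.univ.sup (fun l : Fin k =>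
                i ⟨2 * l.val + 1, by omega⟩ - i ⟨2 * l.val, by omega⟩)) ∧
        C' * α ^ (Finset.univ.sup (fun l : Fin k =>
                i ⟨2 * l.val + 1, by omega⟩ - i ⟨2 * l.val, by omega⟩))
            ≤ C' * ∏ l : Fin k,
                (α ^ ((1 : ℝ) / k)) ^ (i ⟨2 * l.val + 1, by omega⟩ - i ⟨2 * l.val, by omega⟩) := by
  obtain ⟨s₀, hs₀⟩ : S.Nonempty := Finset.card_pos.mp (by omega)
  have hSne : S.Nonempty := ⟨s₀, hs₀⟩
  set B := S.sup' hSne (fun x => |x|) with hBdef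
  have hBmem : ∀ x ∈ S, |x| ≤ B := fun x hx => Finset.le_sup' _ hx
  have hB0 : 0 ≤ B := le_trans (abs_nonneg s₀) (hBmem s₀ hs₀)
  set piF := Fintype.piFinset (fun _ : Fin (2*k) => S) with hpidef
  have hC'0 : (0:ℝ) ≤ (piF.card : ℝ) * B ^ (2*k) * C :=
    mul_nonneg (mul_nonneg (Nat.cast_nonneg _) (pow_nonneg hB0 _)) hC.le
  refine ⟨(piF.card : ℝ) * B ^ (2*k) * C, hC'0, fun i hmono => ?_⟩
  refine ⟨?_, mul_le_mul_of_nonneg_left (pow_sup_le_prod k hk α hα0 hα1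
    (fun l : Fin k => i ⟨2 * l.val + 1, by omega⟩ - i ⟨2 * l.val, by omega⟩)) hC'0⟩
  -- main bound
  obtain ⟨lm, -, hlm⟩ := Finset.exists_mem_eq_sup (Finset.univ : Finset (Fin k))
    ⟨⟨0, hk⟩, Finset.mem_univ _⟩
    (fun l : Fin k => i ⟨2 * l.val + 1, by omega⟩ - i ⟨2 * l.val, by omega⟩)
  set M := Finset.univ.sup (fun l : Fin k =>
      i ⟨2 * l.val + 1, by omega⟩ - i ⟨2 * l.val, by omega⟩) with hMdef
  obtain ⟨L, hLdef⟩ : ∃ L : Fin (2*k), L = ⟨2*lm.val+1, by omega⟩ := ⟨_, rfl⟩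
  obtain ⟨past, hpastdef⟩ : ∃ p, p = (Finset.univ : Finset (Fin (2*k))).filter (fun t => t < L) :=
    ⟨_, rfl⟩
  obtain ⟨fut, hfutdef⟩ : ∃ p, p = (Finset.univ : Finset (Fin (2*k))).filter (fun t => L ≤ t) :=
    ⟨_, rfl⟩
  have hmem_past : ∀ t : Fin (2*k), t ∈ past ↔ t < L := by intro t; simp [hpastdef]
  have hmem_fut : ∀ t : Fin (2*k), t ∈ fut ↔ L ≤ t := by intro t; simp [hfutdef]
  have hLval : L.val = 2 * lm.val + 1 := by rw [hLdef]
  have hL2k : L.val < 2 * k := L.isLt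
  have hLpos : 0 < L.val := by rw [hLval]; omega
  -- splitting of the full event
  have hsplit : ∀ s : Fin (2*k) → ℝ, valueEvent a i s Finset.univ
      = valueEvent a i s fut ∩ valueEvent a i s past := by
    intro s; ext ω
    simp only [valueEvent, Set.mem_setOf_eq, Set.mem_inter_iff]
    constructor
    · intro H
      exact ⟨fun t _ => H t (Finset.mem_univ t), fun t _ => H t (Finset.mem_univ t)⟩
    · rintro ⟨H1, H2⟩ t _
      rcases lt_or_ge t L with h | h
      · exact H2 t ((hmem_past t).mpr h)
      · exact H1 t ((hmem_fut t).mpr h)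
  -- the full integral as a sum over states
  have hfull : (∫ ω, ∏ r : Fin (2*k), a (i r) ω)
      = ∑ s ∈ piF, (∏ t, s t) * (volume (valueEvent a i s Finset.univ)).toReal := by
    have h1 : ∀ ω, (∏ r : Fin (2*k), a (i r) ω)
        = ∑ s ∈ piF, (valueEvent a i s (Finset.univ : Finset (Fin (2*k)))).indicator
            (fun _ => ∏ t, s t) ω := by
      intro ω
      have hd := sum_indicator_decomp S a i hvals (Finset.univ : Finset (Fin (2*k))) hs₀
        (fun s => ∏ t, s t) ω
      rw [Finset.filter_true_of_mem (fun s _ => fun t ht => absurd (Finset.mem_univ t) ht)] at hd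
      rw [hd]
      exact Finset.prod_congr rfl fun t _ => by simp
    simp only [h1]
    exact integral_sum_indicator piF _ (fun s => valueEvent_measurableSet a hmeas i s _) _
  -- the past sum vanishes
  have hpast_Iio : past = Finset.Iio L := by ext t; rw [hpastdef]; simp
  have hpastcard : past.card = 2 * lm.val + 1 := by
    rw [hpast_Iio]; simp [hLval]
  have hXzero : ∑ u ∈ piF.filter (fun u => ∀ t ∉ past, u t = s₀),
      (∏ t ∈ past, u t) * (volume (valueEvent a i u past)).toReal = 0 := by
    have h1 : ∀ ω, (∏ t ∈ past, a (i t) ω)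
        = ∑ u ∈ piF.filter (fun u => ∀ t ∉ past, u t = s₀),
            (valueEvent a i u past).indicator (fun _ => ∏ t ∈ past, u t) ω := by
      intro ω
      rw [sum_indicator_decomp S a i hvals past hs₀ (fun u => ∏ t ∈ past, u t) ω]
      exact Finset.prod_congr rfl fun t ht => by simp [ht]
    have h2 : (∫ ω, ∏ t ∈ past, a (i t) ω)
        = ∑ u ∈ piF.filter (fun u => ∀ t ∉ past, u t = s₀),
            (∏ t ∈ past, u t) * (volume (valueEvent a i u past)).toReal := by
      simp only [h1]
      exact integral_sum_indicator _ _ (fun s => valueEvent_measurableSet a hmeas i s past) _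
    rw [← h2]
    have h3 : ∀ ω, (∏ t ∈ past, a (i t) ω)
        = ∏ u : Fin past.card, a (i ((past.orderIsoOfFin rfl u) : Fin (2*k))) ω := by
      intro ω
      rw [← Finset.prod_coe_sort past (fun t => a (i t) ω)]
      exact (Equiv.prod_comp (past.orderIsoOfFin rfl).toEquiv
        (fun x : {x // x ∈ past} => a (i x) ω)).symm
    simp only [h3]
    exact hodd past.card (by rw [hpastcard]; exact ⟨lm.val, by omega⟩) _
  have hnotfut : ∀ t : Fin (2*k), t ∉ fut → t ∈ past := by
    intro t ht
    exact (hmem_past t).mpr (lt_of_not_ge fun h => ht ((hmem_fut t).mpr h))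
  have hfutnotpast : ∀ t : Fin (2*k), t ∈ fut → t ∉ past := by
    intro t ht hp
    exact absurd ((hmem_past t).mp hp) (not_lt.mpr ((hmem_fut t).mp ht))
  -- factorization of the product measure sum
  have hfactor : ∑ s ∈ piF, ((∏ t ∈ past, s t) * (volume (valueEvent a i s past)).toReal)
        * ((∏ t ∈ fut, s t) * (volume (valueEvent a i s fut)).toReal)
      = (∑ u ∈ piF.filter (fun u => ∀ t ∉ past, u t = s₀),
          (∏ t ∈ past, u t) * (volume (valueEvent a i u past)).toReal)
        * (∑ v ∈ piF.filter (fun v => ∀ t ∉ fut, v t = s₀),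
          (∏ t ∈ fut, v t) * (volume (valueEvent a i v fut)).toReal) := by
    rw [Finset.sum_mul_sum, ← Finset.sum_product']
    refine Finset.sum_nbij'
      (fun s => (fun t => if t ∈ past then s t else s₀, fun t => if t ∈ past then s₀ else s t))
      (fun p => fun t => if t ∈ past then p.1 t else p.2 t) ?_ ?_ ?_ ?_ ?_
    · intro s hs
      have hsS : ∀ t, s t ∈ S := Fintype.mem_piFinset.mp hs
      refine Finset.mem_product.mpr ⟨?_, ?_⟩
      · refine Finset.mem_filter.mpr
          ⟨Fintype.mem_piFinset.mpr fun t => ?_, fun t ht => by simp [ht]⟩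
        by_cases ht : t ∈ past <;> simp [ht, hs₀, hsS t]
      · refine Finset.mem_filter.mpr
          ⟨Fintype.mem_piFinset.mpr fun t => ?_, fun t ht => ?_⟩
        · by_cases ht : t ∈ past <;> simp [ht, hs₀, hsS t]
        · simp [hnotfut t ht]
    · intro p hp
      obtain ⟨h1, h2⟩ := Finset.mem_product.mp hp
      have h1S := Fintype.mem_piFinset.mp (Finset.mem_filter.mp h1).1
      have h2S := Fintype.mem_piFinset.mp (Finset.mem_filter.mp h2).1
      exact Fintype.mem_piFinset.mpr fun t => by
        by_cases ht : t ∈ past <;> simp [ht, h1S t, h2S t]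
    · intro s hs
      funext t
      by_cases ht : t ∈ past <;> simp [ht]
    · intro p hp
      obtain ⟨h1, h2⟩ := Finset.mem_product.mp hp
      have h1c := (Finset.mem_filter.mp h1).2
      have h2c := (Finset.mem_filter.mp h2).2
      refine Prod.ext ?_ ?_
      · funext t
        by_cases ht : t ∈ past
        · simp [ht]
        · simp [ht, h1c t ht]
      · funext t
        by_cases ht : t ∈ past
        · have htf : t ∉ fut := fun hf => hfutnotpast t hf ht
          simp [ht, h2c t htf]
        · simp [ht]
    · intro s hs
      have hu : ∀ t ∈ past, s t = (fun t => if t ∈ past then s t else s₀) t := by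
        intro t ht; simp [ht]
      have hv : ∀ t ∈ fut, s t = (fun t => if t ∈ past then s₀ else s t) t := by
        intro t ht; simp [hfutnotpast t ht]
      rw [Finset.prod_congr rfl hu, Finset.prod_congr rfl hv,
        valueEvent_congr a i past hu, valueEvent_congr a i fut hv]
  -- the exponent identity
  have hMeq : M = i L - i ⟨L.val - 1, by omega⟩ := by
    simp only [hLdef, hlm]
    congr 1 <;> exact congrArg i (Fin.ext (by omega))
  -- key per-state estimate
  have hkey : ∀ s ∈ piF, |(volume (valueEvent a i s Finset.univ)).toReal
        - (volume (valueEvent a i s past)).toReal * (volume (valueEvent a i s fut)).toReal|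
      ≤ C * α ^ M * (volume (valueEvent a i s past)).toReal := by
    intro s _
    rw [hsplit s]
    by_cases h0 : volume (valueEvent a i s past) = 0
    · have h1 : volume (valueEvent a i s fut ∩ valueEvent a i s past) = 0 :=
        measure_mono_null Set.inter_subset_right h0
      simp [h0, h1]
    · have h0' : volume (valueEvent a i s (Finset.univ.filter (fun t => t < L))) ≠ 0 := by
        rw [← hpastdef]; exact h0
      have hm := hmix (2*k) i hmono s L hLpos h0'
      rw [← hpastdef, ← hfutdef, ← hMeq] at hm
      have hPpos : 0 < (volume (valueEvent a i s past)).toReal :=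
        ENNReal.toReal_pos h0 (measure_ne_top _ _)
      have hrw : (volume (valueEvent a i s fut ∩ valueEvent a i s past)).toReal
            - (volume (valueEvent a i s past)).toReal * (volume (valueEvent a i s fut)).toReal
          = ((volume (valueEvent a i s fut ∩ valueEvent a i s past)).toReal
              / (volume (valueEvent a i s past)).toReal
              - (volume (valueEvent a i s fut)).toReal)
            * (volume (valueEvent a i s past)).toReal := by
        field_simp
      rw [hrw, abs_mul, abs_of_pos hPpos]
      exact mul_le_mul_of_nonneg_right hm hPpos.le
  -- put everything together
  have hprodsplit : ∀ s : Fin (2*k) → ℝ, (∏ t, s t) = (∏ t ∈ past, s t) * (∏ t ∈ fut, s t) := by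
    intro s
    rw [hpastdef, hfutdef,
      ← Finset.prod_filter_mul_prod_filter_not Finset.univ (fun t => t < L) s]
    congr 1
    exact Finset.prod_congr (Finset.filter_congr fun t _ => by rw [not_lt]) fun _ _ => rfl
  have hT : ∑ s ∈ piF, ((∏ t ∈ past, s t) * (volume (valueEvent a i s past)).toReal)
      * ((∏ t ∈ fut, s t) * (volume (valueEvent a i s fut)).toReal) = 0 := by
    rw [hfactor, hXzero, zero_mul]
  have hsum_rewrite : ∑ s ∈ piF, (∏ t, s t) * (volume (valueEvent a i s Finset.univ)).toReal
      = ∑ s ∈ piF, (∏ t ∈ past, s t) * (∏ t ∈ fut, s t)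
          * ((volume (valueEvent a i s Finset.univ)).toReal
            - (volume (valueEvent a i s past)).toReal * (volume (valueEvent a i s fut)).toReal)
        + ∑ s ∈ piF, ((∏ t ∈ past, s t) * (volume (valueEvent a i s past)).toReal)
            * ((∏ t ∈ fut, s t) * (volume (valueEvent a i s fut)).toReal) := by
    rw [← Finset.sum_add_distrib]
    refine Finset.sum_congr rfl fun s _ => ?_
    rw [hprodsplit s]; ring
  have habs : ∀ s ∈ piF, |∏ t, s t| ≤ B ^ (2*k) := by
    intro s hs
    have hsS := Fintype.mem_piFinset.mp hs
    calc |∏ t, s t| = ∏ t, |s t| := Finset.abs_prod _ _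
      _ ≤ ∏ _t : Fin (2*k), B :=
          Finset.prod_le_prod (fun t _ => abs_nonneg _) (fun t _ => hBmem _ (hsS t))
      _ = B ^ (2*k) := by simp
  have hPle1 : ∀ s : Fin (2*k) → ℝ, (volume (valueEvent a i s past)).toReal ≤ 1 := by
    intro s
    have h := prob_le_one (μ := (volume : Measure Ω)) (s := valueEvent a i s past)
    simpa using ENNReal.toReal_mono ENNReal.one_ne_top h
  rw [hfull, hsum_rewrite, hT, add_zero]
  calc |∑ s ∈ piF, (∏ t ∈ past, s t) * (∏ t ∈ fut, s t)
          * ((volume (valueEvent a i s Finset.univ)).toReal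
            - (volume (valueEvent a i s past)).toReal * (volume (valueEvent a i s fut)).toReal)|
      ≤ ∑ s ∈ piF, |(∏ t ∈ past, s t) * (∏ t ∈ fut, s t)
          * ((volume (valueEvent a i s Finset.univ)).toReal
            - (volume (valueEvent a i s past)).toReal * (volume (valueEvent a i s fut)).toReal)| :=
        Finset.abs_sum_le_sum_abs _ _
    _ ≤ ∑ s ∈ piF, B ^ (2*k) * (C * α ^ M * (volume (valueEvent a i s past)).toReal) := by
        refine Finset.sum_le_sum fun s hs => ?_
        rw [abs_mul]
        refine mul_le_mul ?_ (hkey s hs) (abs_nonneg _) (pow_nonneg hB0 _)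
        rw [← hprodsplit s]
        exact habs s hs
    _ = B ^ (2*k) * (C * α ^ M) * ∑ s ∈ piF, (volume (valueEvent a i s past)).toReal := by
        rw [Finset.mul_sum]
        exact Finset.sum_congr rfl fun s _ => by ring
    _ ≤ B ^ (2*k) * (C * α ^ M) * (piF.card : ℝ) := by
        refine mul_le_mul_of_nonneg_left ?_
          (mul_nonneg (pow_nonneg hB0 _) (mul_nonneg hC.le (pow_nonneg hα0 _)))
        calc ∑ s ∈ piF, (volume (valueEvent a i s past)).toReal
            ≤ piF.card • (1:ℝ) := Finset.sum_le_card_nsmul _ _ _ (fun s _ => hPle1 s)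
          _ = (piF.card : ℝ) := by simp
    _ = (piF.card : ℝ) * B ^ (2*k) * C * α ^ M := by ring
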